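/- arXiv:1203.5602 — 5 statements merged into one kernel-verified Lean document; each statement's English description precedes it below -/
import Mathlib

section
/- Let P1, P2, a, b, c be positive real numbers and let C(x) = (1/2)·log₂(1+x). Set δ* = (1+(1+c)P1)/(bP2) and R2* = max{C((1+cP1)/δ*), C(P2) + C(cP1/(1+δ*))}. Define R1⁽¹⁾ = max{ min{ C(P1 + cP1/(1+δ*)), C(P1+bP2) + C(cP1/(1+δ*)) − R2* }, C(P1/(1+bP2)) } and R1⁽²⁾ = max{ min{ C(aP1 + cP1/(1+δ*)), C(aP1+P2) + C(cP1/(1+δ*)) − R2* }, C(aP1/(1+P2)) }. Then R1⁽¹⁾ − R1⁽²⁾ equals: C(P1 + bcP1P2/(1+(1+c)P1+bP2)) − C(aP1/(1+P2)) if b ≥ 1+(1+c)P1; C(P1+bP2) − C(aP1+P2) if 1 ≤ b < 1+(1+c)P1; and C(P1/(1+bP2)) − C(aP1/(1+P2)) if 0 < b < 1. -/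
/-- The Gaussian capacity function `C(x) = (1/2)·log₂(1+x)`. -/
noncomputable def C (x : ℝ) : ℝ := (1 / 2) * Real.logb 2 (1 + x)

lemma C_add_C {x y : ℝ} (hx : -1 < x) (hy : -1 < y) :
    C x + C y = C (x + y + x * y) := by
  unfold C
  rw [← mul_add, ← Real.logb_mul (by linarith) (by linarith)]
  ring_nf

lemma C_le_C {x y : ℝ} (hx : -1 < x) (h : x ≤ y) : C x ≤ C y := by
  unfold C
  have := Real.logb_le_logb_of_le (b := 2) (by norm_num) (x := 1 + x)
    (by linarith) (by linarith : 1 + x ≤ 1 + y)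
  linarith

set_option maxHeartbeats 1600000 in
/-- Theorem 2 of the paper (computational content): evaluation of the achievable
secrecy rate for the Gaussian relay-eavesdropper channel with the choice
`δC = δ*` and `R₂ = R₂*`. -/
theorem stmt_0 (P1 P2 a b c : ℝ) (hP1 : 0 < P1) (hP2 : 0 < P2)
    (ha : 0 < a) (hb : 0 < b) (hc : 0 < c) :
    let δ : ℝ := (1 + (1 + c) * P1) / (b * P2)
    let R2 : ℝ := max (C ((1 + c * P1) / δ)) (C P2 + C (c * P1 / (1 + δ)))
    let R11 : ℝ := max (min (C (P1 + c * P1 / (1 + δ)))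
      (C (P1 + b * P2) + C (c * P1 / (1 + δ)) - R2)) (C (P1 / (1 + b * P2)))
    let R12 : ℝ := max (min (C (a * P1 + c * P1 / (1 + δ)))
      (C (a * P1 + P2) + C (c * P1 / (1 + δ)) - R2)) (C (a * P1 / (1 + P2)))
    (1 + (1 + c) * P1 ≤ b →
      R11 - R12 = C (P1 + b * c * P1 * P2 / (1 + (1 + c) * P1 + b * P2))
        - C (a * P1 / (1 + P2))) ∧
    (1 ≤ b → b < 1 + (1 + c) * P1 →
      R11 - R12 = C (P1 + b * P2) - C (a * P1 + P2)) ∧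
    (b < 1 →
      R11 - R12 = C (P1 / (1 + b * P2)) - C (a * P1 / (1 + P2))) := by
  intro δ R2 R11 R12
  have hδ : δ = (1 + (1 + c) * P1) / (b * P2) := rfl
  have hR2 : R2 = max (C ((1 + c * P1) / δ)) (C P2 + C (c * P1 / (1 + δ))) := rfl
  have hR11 : R11 = max (min (C (P1 + c * P1 / (1 + δ)))
      (C (P1 + b * P2) + C (c * P1 / (1 + δ)) - R2)) (C (P1 / (1 + b * P2))) := rfl
  have hR12 : R12 = max (min (C (a * P1 + c * P1 / (1 + δ)))
      (C (a * P1 + P2) + C (c * P1 / (1 + δ)) - R2)) (C (a * P1 / (1 + P2))) := rfl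
  have hN : (0:ℝ) < 1 + (1 + c) * P1 := by positivity
  have hs : 0 < b * P2 := mul_pos hb hP2
  have hδ0 : 0 < δ := by rw [hδ]; positivity
  have h1δ : (0:ℝ) < 1 + δ := by linarith
  have hq0 : 0 < c * P1 / (1 + δ) := by positivity
  have hA0 : 0 < (1 + c * P1) / δ := by positivity
  have h1P2 : (0:ℝ) < 1 + P2 := by linarith
  have h1s : (0:ℝ) < 1 + b * P2 := by linarith
  have hNs : (0:ℝ) < 1 + (1 + c) * P1 + b * P2 := by linarith
  have haP1 : 0 < a * P1 := mul_pos ha hP1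
  have hcP1 : 0 < c * P1 := mul_pos hc hP1
  -- unconditional identities
  have Hkey : C (P1 + b * P2) + C (c * P1 / (1 + δ))
      = C (P1 + c * P1 / (1 + δ)) + C ((1 + c * P1) / δ) := by
    rw [C_add_C (by linarith) (by linarith), C_add_C (by linarith) (by linarith)]
    congr 1
    rw [hδ]
    field_simp
    ring
  have Hsplit : C (a * P1 + P2) = C P2 + C (a * P1 / (1 + P2)) := by
    have h0 : 0 < a * P1 / (1 + P2) := by positivity
    rw [C_add_C (by linarith) (by linarith)]
    congr 1
    field_simp
    ring
  have hq6 : a * P1 / (1 + P2) ≤ a * P1 + c * P1 / (1 + δ) := by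
    have := div_le_self haP1.le (by linarith : (1:ℝ) ≤ 1 + P2)
    linarith
  constructor
  · -- Case 1 : 1 + (1+c) P1 ≤ b
    intro hbN
    have hsub : 0 ≤ b * P2 - (1 + (1 + c) * P1) * P2 := by nlinarith
    have hR2eq : R2 = C ((1 + c * P1) / δ) := by
      rw [hR2]
      apply max_eq_left
      rw [C_add_C (by linarith) (by linarith)]
      apply C_le_C (by nlinarith)
      have key : (1 + c * P1) / δ - (P2 + c * P1 / (1 + δ) + P2 * (c * P1 / (1 + δ)))
          = ((1 + (1 + c) * P1 + b * P2 + c * P1 * (b * P2))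
              * (b * P2 - (1 + (1 + c) * P1) * P2))
            / ((1 + (1 + c) * P1) * (1 + (1 + c) * P1 + b * P2)) := by
        rw [hδ]
        field_simp
        ring
      nlinarith [div_nonneg (mul_nonneg (by positivity :
        (0:ℝ) ≤ 1 + (1 + c) * P1 + b * P2 + c * P1 * (b * P2)) hsub)
        (by positivity : (0:ℝ) ≤ (1 + (1 + c) * P1) * (1 + (1 + c) * P1 + b * P2))]
    have e2eq : C (P1 + b * P2) + C (c * P1 / (1 + δ)) - R2
        = C (P1 + c * P1 / (1 + δ)) := by
      rw [hR2eq]; linarith [Hkey]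
    have I2 : C (a * P1 + P2) + C (c * P1 / (1 + δ)) - R2
        ≤ C (a * P1 + c * P1 / (1 + δ)) := by
      rw [hR2eq]
      have h1 : C (a * P1 + P2) + C (c * P1 / (1 + δ))
          ≤ C (a * P1 + c * P1 / (1 + δ)) + C ((1 + c * P1) / δ) := by
        rw [C_add_C (by nlinarith) (by linarith), C_add_C (by nlinarith) (by linarith)]
        apply C_le_C (by nlinarith)
        have hsub2 : 0 ≤ b * P2 * (1 + (a + c) * P1) - (1 + (1 + c) * P1) * P2 := by
          nlinarith
        have key : (a * P1 + c * P1 / (1 + δ)) + (1 + c * P1) / δ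
              + (a * P1 + c * P1 / (1 + δ)) * ((1 + c * P1) / δ)
            - ((a * P1 + P2) + c * P1 / (1 + δ) + (a * P1 + P2) * (c * P1 / (1 + δ)))
            = ((1 + (1 + c) * P1 + (1 + c * P1) * (b * P2))
                * (b * P2 * (1 + (a + c) * P1) - (1 + (1 + c) * P1) * P2))
              / ((1 + (1 + c) * P1) * (1 + (1 + c) * P1 + b * P2)) := by
          rw [hδ]
          field_simp
          ring
        nlinarith [div_nonneg (mul_nonneg (by positivity :
          (0:ℝ) ≤ 1 + (1 + c) * P1 + (1 + c * P1) * (b * P2)) hsub2)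
          (by positivity : (0:ℝ) ≤ (1 + (1 + c) * P1) * (1 + (1 + c) * P1 + b * P2))]
      linarith
    have I3 : C (a * P1 + P2) + C (c * P1 / (1 + δ)) - R2
        ≤ C (a * P1 / (1 + P2)) := by
      rw [hR2eq]
      have h0 : 0 < a * P1 / (1 + P2) := by positivity
      have h1 : C (a * P1 + P2) + C (c * P1 / (1 + δ))
          ≤ C (a * P1 / (1 + P2)) + C ((1 + c * P1) / δ) := by
        rw [C_add_C (by nlinarith) (by linarith), C_add_C (by linarith) (by linarith)]
        apply C_le_C (by nlinarith)
        have key : (a * P1 / (1 + P2)) + (1 + c * P1) / δ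
              + (a * P1 / (1 + P2)) * ((1 + c * P1) / δ)
            - ((a * P1 + P2) + c * P1 / (1 + δ) + (a * P1 + P2) * (c * P1 / (1 + δ)))
            = ((1 + a * P1 + P2) * (1 + (1 + c) * P1 + (1 + c * P1) * (b * P2))
                * (b * P2 - (1 + (1 + c) * P1) * P2))
              / ((1 + (1 + c) * P1) * (1 + P2) * (1 + (1 + c) * P1 + b * P2)) := by
          rw [hδ]
          field_simp
          ring
        nlinarith [div_nonneg (mul_nonneg (mul_nonneg
          (by positivity : (0:ℝ) ≤ 1 + a * P1 + P2)
          (by positivity : (0:ℝ) ≤ 1 + (1 + c) * P1 + (1 + c * P1) * (b * P2))) hsub)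
          (by positivity :
            (0:ℝ) ≤ (1 + (1 + c) * P1) * (1 + P2) * (1 + (1 + c) * P1 + b * P2))]
      linarith
    have hmax1 : C (P1 / (1 + b * P2)) ≤ C (P1 + c * P1 / (1 + δ)) := by
      apply C_le_C (by linarith [div_pos hP1 h1s])
      have := div_le_self hP1.le (by linarith : (1:ℝ) ≤ 1 + b * P2)
      linarith
    rw [hR11, hR12, e2eq, min_self, max_eq_left hmax1, min_eq_right I2,
      max_eq_right I3]
    have harg : P1 + c * P1 / (1 + δ)
        = P1 + b * c * P1 * P2 / (1 + (1 + c) * P1 + b * P2) := by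
      rw [hδ]
      field_simp
      ring
    rw [harg]
  have main : b < 1 + (1 + c) * P1 →
      R11 - R12 = max (C (P1 + b * P2) - C P2) (C (P1 / (1 + b * P2)))
        - C (a * P1 / (1 + P2)) := by
    intro hbN
    have hsub : 0 ≤ (1 + (1 + c) * P1) * P2 - b * P2 := by nlinarith
    have hR2eq : R2 = C P2 + C (c * P1 / (1 + δ)) := by
      rw [hR2]
      apply max_eq_right
      have h1 : C P2 + C (c * P1 / (1 + δ))
          = C (P2 + c * P1 / (1 + δ) + P2 * (c * P1 / (1 + δ))) :=
        C_add_C (by linarith) (by linarith)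
      rw [h1]
      apply C_le_C (by linarith)
      have key : (P2 + c * P1 / (1 + δ) + P2 * (c * P1 / (1 + δ))) - (1 + c * P1) / δ
          = ((1 + (1 + c) * P1 + b * P2 + c * P1 * (b * P2))
              * ((1 + (1 + c) * P1) * P2 - b * P2))
            / ((1 + (1 + c) * P1) * (1 + (1 + c) * P1 + b * P2)) := by
        rw [hδ]
        field_simp
        ring
      nlinarith [div_nonneg (mul_nonneg (by positivity :
        (0:ℝ) ≤ 1 + (1 + c) * P1 + b * P2 + c * P1 * (b * P2)) hsub)
        (by positivity : (0:ℝ) ≤ (1 + (1 + c) * P1) * (1 + (1 + c) * P1 + b * P2))]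
    have e11 : C (P1 + b * P2) + C (c * P1 / (1 + δ)) - R2
        = C (P1 + b * P2) - C P2 := by rw [hR2eq]; ring
    have e12 : C (a * P1 + P2) + C (c * P1 / (1 + δ)) - R2
        = C (a * P1 / (1 + P2)) := by rw [hR2eq, Hsplit]; ring
    have I5 : C (P1 + b * P2) - C P2 ≤ C (P1 + c * P1 / (1 + δ)) := by
      have h1 : C (P1 + c * P1 / (1 + δ)) + C P2
          = C ((P1 + c * P1 / (1 + δ)) + P2 + (P1 + c * P1 / (1 + δ)) * P2) :=
        C_add_C (by linarith) (by linarith)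
      have h2 : C (P1 + b * P2)
          ≤ C ((P1 + c * P1 / (1 + δ)) + P2 + (P1 + c * P1 / (1 + δ)) * P2) := by
        apply C_le_C (by linarith)
        have key : ((P1 + c * P1 / (1 + δ)) + P2 + (P1 + c * P1 / (1 + δ)) * P2)
            - (P1 + b * P2)
            = ((1 + P1 + b * P2) * ((1 + (1 + c) * P1) * P2 - b * P2))
              / (1 + (1 + c) * P1 + b * P2) := by
          rw [hδ]
          field_simp
          ring
        nlinarith [div_nonneg (mul_nonneg
          (by positivity : (0:ℝ) ≤ 1 + P1 + b * P2) hsub) hNs.le]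
      linarith
    have I6 : C (a * P1 / (1 + P2)) ≤ C (a * P1 + c * P1 / (1 + δ)) :=
      C_le_C (by linarith [div_pos haP1 h1P2]) hq6
    rw [hR11, hR12, e11, e12, min_eq_right I5, min_eq_right I6, max_self]
  constructor
  · -- Case 2 : 1 ≤ b < 1 + (1+c) P1
    intro hb1 hbN
    rw [main hbN]
    have hPs : P2 ≤ b * P2 := by nlinarith
    have I7 : C (P1 / (1 + b * P2)) ≤ C (P1 + b * P2) - C P2 := by
      have hd : 0 < P1 / (1 + b * P2) := by positivity
      have h1 : C (P1 / (1 + b * P2)) + C P2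
          = C (P1 / (1 + b * P2) + P2 + (P1 / (1 + b * P2)) * P2) :=
        C_add_C (by linarith) (by linarith)
      have h2 : C (P1 / (1 + b * P2) + P2 + (P1 / (1 + b * P2)) * P2)
          ≤ C (P1 + b * P2) := by
        apply C_le_C (by nlinarith [div_pos hP1 h1s, mul_pos (div_pos hP1 h1s) hP2])
        have key : (P1 + b * P2)
            - (P1 / (1 + b * P2) + P2 + (P1 / (1 + b * P2)) * P2)
            = ((1 + P1 + b * P2) * (b * P2 - P2)) / (1 + b * P2) := by
          field_simp
          ring
        nlinarith [div_nonneg (mul_nonneg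
          (by positivity : (0:ℝ) ≤ 1 + P1 + b * P2)
          (by linarith : (0:ℝ) ≤ b * P2 - P2)) h1s.le]
      linarith
    rw [max_eq_left I7, Hsplit]
    ring
  · -- Case 3 : b < 1
    intro hb1
    have hbN : b < 1 + (1 + c) * P1 := by nlinarith
    rw [main hbN]
    have hPs : b * P2 ≤ P2 := by nlinarith
    have I8 : C (P1 + b * P2) - C P2 ≤ C (P1 / (1 + b * P2)) := by
      have hd : 0 < P1 / (1 + b * P2) := by positivity
      have h1 : C (P1 / (1 + b * P2)) + C P2
          = C (P1 / (1 + b * P2) + P2 + (P1 / (1 + b * P2)) * P2) :=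
        C_add_C (by linarith) (by linarith)
      have h2 : C (P1 + b * P2)
          ≤ C (P1 / (1 + b * P2) + P2 + (P1 / (1 + b * P2)) * P2) := by
        apply C_le_C (by linarith)
        have key : (P1 / (1 + b * P2) + P2 + (P1 / (1 + b * P2)) * P2)
            - (P1 + b * P2)
            = ((1 + P1 + b * P2) * (P2 - b * P2)) / (1 + b * P2) := by
          field_simp
          ring
        nlinarith [div_nonneg (mul_nonneg
          (by positivity : (0:ℝ) ≤ 1 + P1 + b * P2)
          (by linarith : (0:ℝ) ≤ P2 - b * P2)) h1s.le]
      linarith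
    rw [max_eq_right I8]
end

section
/- Let P1, P2, a, b, c be positive real numbers and let C(x) = (1/2)·log₂(1+x). Set δ* = (1+(1+c)P1)/(bP2) and R2* = max{C((1+cP1)/δ*), C(P2) + C(cP1/(1+δ*))}. Then max{ min{ C(aP1 + cP1/(1+δ*)), C(aP1+P2) + C(cP1/(1+δ*)) − R2* }, C(aP1/(1+P2)) } = C(aP1/(1+P2)). -/
/-- Step in the proof of Theorem 2: with `δC = δ*` and `R₂ = R₂*`, the
eavesdropper's rate expression `R₁⁽²⁾(R₂*, δ*)` equals `C(aP₁/(1+P₂))`. -/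
theorem stmt_1 (P1 P2 a b c : ℝ) (hP1 : 0 < P1) (hP2 : 0 < P2)
    (ha : 0 < a) (hb : 0 < b) (hc : 0 < c) :
    let δ : ℝ := (1 + (1 + c) * P1) / (b * P2)
    let R2 : ℝ := max (C ((1 + c * P1) / δ)) (C P2 + C (c * P1 / (1 + δ)))
    max (min (C (a * P1 + c * P1 / (1 + δ)))
        (C (a * P1 + P2) + C (c * P1 / (1 + δ)) - R2))
      (C (a * P1 / (1 + P2))) = C (a * P1 / (1 + P2)) := by
  intro δ R2
  apply max_eq_right
  apply le_trans (min_le_right _ _)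
  have hR2 : C P2 + C (c * P1 / (1 + δ)) ≤ R2 := le_max_right _ _
  have key : C (a * P1 + P2) - C P2 = C (a * P1 / (1 + P2)) := by
    unfold C
    have h1 : (0:ℝ) < 1 + P2 := by linarith
    have h2 : (0:ℝ) < 1 + (a * P1 + P2) := by positivity
    rw [← mul_sub, ← Real.logb_div (ne_of_gt h2) (ne_of_gt h1)]
    congr 2
    field_simp
    ring
  linarith
end

section
/- Let P1, P2, a, b be positive reals, C(x) = (1/2)·log₂(1+x), and for a parameter c ≥ 0 define RsI(c) piecewise as: C(P1 + bcP1P2/(1+(1+c)P1+bP2)) − C(aP1/(1+P2)) if b ≥ 1+(1+c)P1; C(P1+bP2) − C(aP1+P2) if 1 ≤ b < 1+(1+c)P1; C(P1/(1+bP2)) − C(aP1/(1+P2)) if 0 < b < 1. Then for every c > 0: (i) if b ≤ 1+P1 then RsI(c) = RsI(0), and (ii) if b > 1+P1 then RsI(c) > RsI(0). -/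
/-- The piecewise achievable secrecy rate `RsI` of Theorem 2 of the paper, as a
function of the source-relay gain `c`. -/
noncomputable def RsI (P1 P2 a b c : ℝ) : ℝ :=
  if 1 + (1 + c) * P1 ≤ b then
    C (P1 + b * c * P1 * P2 / (1 + (1 + c) * P1 + b * P2)) - C (a * P1 / (1 + P2))
  else if 1 ≤ b then
    C (P1 + b * P2) - C (a * P1 + P2)
  else
    C (P1 / (1 + b * P2)) - C (a * P1 / (1 + P2))

lemma C_sub_eq (u v u' v' : ℝ) (hu : 0 < 1 + u) (hv : 0 < 1 + v)
    (hu' : 0 < 1 + u') (hv' : 0 < 1 + v')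
    (h : (1 + u) * (1 + v') = (1 + u') * (1 + v)) :
    C u - C v = C u' - C v' := by
  have hlog := congrArg Real.log h
  rw [Real.log_mul hu.ne' hv'.ne', Real.log_mul hu'.ne' hv.ne'] at hlog
  simp only [C, Real.logb]
  linear_combination hlog / (2 * Real.log 2)

lemma C_sub_lt (u v u' v' : ℝ) (hu : 0 < 1 + u) (hv : 0 < 1 + v)
    (hu' : 0 < 1 + u') (hv' : 0 < 1 + v')
    (h : (1 + u) * (1 + v') < (1 + u') * (1 + v)) :
    C u - C v < C u' - C v' := by
  have hL : 0 < Real.log 2 := Real.log_pos one_lt_two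
  have hlog := Real.log_lt_log (by positivity) h
  rw [Real.log_mul hu.ne' hv'.ne', Real.log_mul hu'.ne' hv.ne'] at hlog
  simp only [C, Real.logb]
  rw [show (1/2) * (Real.log (1+u) / Real.log 2) - (1/2) * (Real.log (1+v) / Real.log 2)
      = (Real.log (1+u) - Real.log (1+v)) / (2 * Real.log 2) by ring,
    show (1/2) * (Real.log (1+u') / Real.log 2) - (1/2) * (Real.log (1+v') / Real.log 2)
      = (Real.log (1+u') - Real.log (1+v')) / (2 * Real.log 2) by ring]
  have hpos : (0:ℝ) < 2 * Real.log 2 := by positivity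
  exact div_lt_div_of_pos_right (by linarith) hpos

/-- Remark 4 of the paper: the proposed scheme's rate coincides with the
interference-assisted (WT-HI) rate (the same expression with `c = 0`) when
`b ≤ 1 + P₁`, and strictly exceeds it when `b > 1 + P₁`. -/
theorem stmt_2 (P1 P2 a b : ℝ) (hP1 : 0 < P1) (hP2 : 0 < P2)
    (ha : 0 < a) (hb : 0 < b) :
    ∀ c : ℝ, 0 < c →
      (b ≤ 1 + P1 → RsI P1 P2 a b c = RsI P1 P2 a b 0) ∧
      (1 + P1 < b → RsI P1 P2 a b 0 < RsI P1 P2 a b c) := by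
  intro c hc
  have hQ : 0 < 1 + P2 := by linarith
  constructor
  · -- b ≤ 1 + P1 : rates coincide
    intro hble
    have hnc : ¬ (1 + (1 + c) * P1 ≤ b) := by nlinarith
    rw [RsI, if_neg hnc]
    rcases eq_or_lt_of_le hble with heq | hlt
    · -- b = 1 + P1
      have h1b : (1:ℝ) ≤ b := by linarith
      rw [if_pos h1b, RsI, if_pos (by linarith : 1 + (1 + 0) * P1 ≤ b)]
      have : b * 0 * P1 * P2 / (1 + (1 + 0) * P1 + b * P2) = 0 := by ring_nf
      rw [this, add_zero]
      apply C_sub_eq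
      · nlinarith
      · nlinarith [mul_pos ha hP1]
      · linarith
      · positivity
      · field_simp
        subst heq
        ring
    · -- b < 1 + P1 : both take the same (c-free) branch
      rw [RsI, if_neg (by push_neg; linarith : ¬ (1 + (1 + 0) * P1 ≤ b))]
  · -- 1 + P1 < b : strict improvement
    intro hblt
    have hAB : a * P1 / (1 + P2) > 0 := by positivity
    rw [RsI, if_pos (by linarith : 1 + (1 + 0) * P1 ≤ b)]
    have hz : b * 0 * P1 * P2 / (1 + (1 + 0) * P1 + b * P2) = 0 := by ring_nf
    rw [hz, add_zero, RsI]
    by_cases hcase : 1 + (1 + c) * P1 ≤ b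
    · rw [if_pos hcase]
      have hD : 0 < 1 + (1 + c) * P1 + b * P2 := by nlinarith
      have ht : 0 < b * c * P1 * P2 / (1 + (1 + c) * P1 + b * P2) := by positivity
      apply C_sub_lt
      · linarith
      · positivity
      · linarith
      · positivity
      · have h1 : 0 < 1 + a * P1 / (1 + P2) := by positivity
        nlinarith
    · rw [if_neg hcase, if_pos (by linarith : (1:ℝ) ≤ b)]
      apply C_sub_lt
      · linarith
      · positivity
      · nlinarith
      · nlinarith [mul_pos ha hP1]
      · have key : 1 + a * P1 / (1 + P2) = (1 + P2 + a * P1) / (1 + P2) := by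
          field_simp
        rw [key, ← mul_div_assoc, lt_div_iff₀ hQ]
        nlinarith [mul_pos (mul_pos hP2 (sub_pos.mpr hblt)) (by positivity : (0:ℝ) < 1 + a * P1 + P2)]
end

section
/- Let P1, P2, c be positive reals, C(x) = (1/2)·log₂(1+x), and let b ≥ 1+(1+c)P1 with δ* = (1+(1+c)P1)/(bP2). Then C((1+cP1)/δ*) ≥ C(P2) + C(cP1/(1+δ*)), i.e., in this regime R2* = max{C((1+cP1)/δ*), C(P2)+C(cP1/(1+δ*))} equals C((1+cP1)/δ*). -/
/-- Branch-selection step in the proof of Theorem 2: when `b ≥ 1 + (1+c)P₁`,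
the first expression in the definition of `R₂*` is the larger one. -/
theorem stmt_3 (P1 P2 c b : ℝ) (hP1 : 0 < P1) (hP2 : 0 < P2) (hc : 0 < c)
    (hb : 1 + (1 + c) * P1 ≤ b) :
    let δ : ℝ := (1 + (1 + c) * P1) / (b * P2)
    C P2 + C (c * P1 / (1 + δ)) ≤ C ((1 + c * P1) / δ) ∧
    max (C ((1 + c * P1) / δ)) (C P2 + C (c * P1 / (1 + δ)))
      = C ((1 + c * P1) / δ) := by
  intro δ
  have hnum : (0:ℝ) < 1 + (1 + c) * P1 := by nlinarith
  have hbpos : 0 < b := lt_of_lt_of_le hnum hb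
  have hδ : 0 < δ := div_pos hnum (mul_pos hbpos hP2)
  have hδP2 : δ * P2 ≤ 1 := by
    have : δ ≤ 1 / P2 := by
      rw [div_le_div_iff₀ (mul_pos hbpos hP2) hP2]
      nlinarith
    calc δ * P2 ≤ (1 / P2) * P2 := by nlinarith
      _ = 1 := by field_simp
  have h1δ : (0:ℝ) < 1 + δ := by linarith
  have hy : 0 < c * P1 / (1 + δ) := div_pos (mul_pos hc hP1) h1δ
  have hx : 0 < (1 + c * P1) / δ := div_pos (by nlinarith) hδ
  -- key fact: (1+P2)*(1 + cP1/(1+δ)) ≤ 1 + (1+cP1)/δ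
  have key : (1 + P2) * (1 + c * P1 / (1 + δ)) ≤ 1 + (1 + c * P1) / δ := by
    have e1 : c * P1 / (1 + δ) * (1 + δ) = c * P1 := div_mul_cancel₀ _ (ne_of_gt h1δ)
    have e2 : (1 + c * P1) / δ * δ = 1 + c * P1 := div_mul_cancel₀ _ (ne_of_gt hδ)
    have h3 : 0 ≤ (1 - δ * P2) * (1 + δ + c * P1) := mul_nonneg (by linarith) (by nlinarith)
    nlinarith [mul_pos hδ h1δ, mul_pos (mul_pos hδ h1δ) hP2, hy, hx,
      mul_le_mul_of_nonneg_left hδP2 (le_of_lt h1δ)]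
  have hmain : C P2 + C (c * P1 / (1 + δ)) ≤ C ((1 + c * P1) / δ) := by
    unfold C
    rw [← mul_add, ← Real.logb_mul (by positivity) (by positivity)]
    have hlog : Real.logb 2 ((1 + P2) * (1 + c * P1 / (1 + δ)))
        ≤ Real.logb 2 (1 + (1 + c * P1) / δ) :=
      Real.logb_le_logb_of_le (by norm_num) (by positivity) key
    linarith
  exact ⟨hmain, max_eq_left hmain⟩
end

section
/- Let B ≥ 2 be an integer and x a real number with x > 0 and (B/2 − 1)·x < 1. Then Σ_{i=1}^{B−1} binom(B−1, i) · xⁱ ≤ (B−1)·x / (1 − (B/2 − 1)·x). -/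
/-- The combinatorial/geometric-series bound used to control the error
probability `P(ε₄)` in the equivocation computation of Theorem 1:
`Σ_{i=1}^{B−1} binom(B−1,i)·xⁱ ≤ (B−1)·x / (1 − (B/2 − 1)·x)`. -/
theorem stmt_4 (B : ℕ) (hB : 2 ≤ B) (x : ℝ) (hx : 0 < x)
    (h : ((B : ℝ) / 2 - 1) * x < 1) :
    ∑ i ∈ Finset.Icc 1 (B - 1), ((B - 1).choose i : ℝ) * x ^ i
      ≤ ((B : ℝ) - 1) * x / (1 - ((B : ℝ) / 2 - 1) * x) := by
  set n := B - 1 with hn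
  set r : ℝ := ((B:ℝ)/2 - 1) * x with hr
  have hB2 : (2:ℝ) ≤ (B:ℝ) := by exact_mod_cast hB
  have hr0 : 0 ≤ r := mul_nonneg (by linarith) hx.le
  have h1r : 0 < 1 - r := by linarith
  have hnB : ((n:ℕ):ℝ) = (B:ℝ) - 1 := by
    rw [hn, Nat.cast_sub (by omega)]; simp
  -- step inequality
  have key : ∀ i, 1 ≤ i → (n.choose (i+1) : ℝ) * x^(i+1) ≤ r * ((n.choose i : ℝ) * x^i) := by
    intro i hi
    have hid : (n.choose (i+1) : ℝ) * ((i:ℝ)+1) = (n.choose i : ℝ) * ((n - i : ℕ):ℝ) := by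
      exact_mod_cast congrArg (Nat.cast : ℕ → ℝ) (Nat.choose_succ_right_eq n i)
    have hnat : 2 * (n - i) ≤ (i+1) * (B-2) := by
      calc 2 * (n - i) ≤ 2 * (B - 2) := by omega
        _ ≤ (i+1) * (B-2) := Nat.mul_le_mul_right _ (by omega)
    have hcast : 2 * ((n - i : ℕ):ℝ) ≤ ((i:ℝ)+1) * ((B:ℝ)-2) := by
      have := (Nat.cast_le (α := ℝ)).2 hnat
      push_cast [Nat.cast_sub (show 2 ≤ B from hB)] at this
      convert this using 1 <;> ring_nf
    have hc : (0:ℝ) ≤ (n.choose i : ℝ) := Nat.cast_nonneg _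
    have hxp : (0:ℝ) ≤ x ^ i := pow_nonneg hx.le i
    have hi1 : (0:ℝ) < (i:ℝ) + 1 := by positivity
    rw [hr, pow_succ]
    rw [show (n.choose (i+1) : ℝ) * (x^i * x) = ((n.choose (i+1) : ℝ) * ((i:ℝ)+1)) * (x^i * x) / ((i:ℝ)+1) by field_simp, hid]
    rw [div_le_iff₀ hi1]
    nlinarith [mul_nonneg (mul_nonneg hc hxp) hx.le, mul_le_mul_of_nonneg_left hcast (mul_nonneg (mul_nonneg hc hxp) hx.le)]
  -- u_i ≤ u_1 * r^(i-1)
  have hu : ∀ i, 1 ≤ i → (n.choose i : ℝ) * x^i ≤ ((B:ℝ)-1) * x * r^(i-1) := by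
    intro i hi
    induction i with
    | zero => omega
    | succ j ih =>
      rcases Nat.eq_or_lt_of_le hi with h1 | h1
      · rw [← h1]; simp [Nat.choose_one_right, hnB]
      · have hj : 1 ≤ j := by omega
        calc (n.choose (j+1) : ℝ) * x^(j+1) ≤ r * ((n.choose j : ℝ) * x^j) := key j hj
          _ ≤ r * (((B:ℝ)-1) * x * r^(j-1)) := by
              exact mul_le_mul_of_nonneg_left (ih hj) hr0
          _ = ((B:ℝ)-1) * x * r^(j+1-1) := by
              rw [show j+1-1 = (j-1)+1 by omega, pow_succ]; ring
  calc ∑ i ∈ Finset.Icc 1 n, ((n.choose i : ℝ)) * x ^ i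
      ≤ ∑ i ∈ Finset.Icc 1 n, ((B:ℝ)-1) * x * r^(i-1) := by
        apply Finset.sum_le_sum
        intro i hi
        exact hu i (Finset.mem_Icc.mp hi).1
    _ = ((B:ℝ)-1) * x * ∑ j ∈ Finset.range n, r^j := by
        rw [Finset.mul_sum]
        apply Finset.sum_nbij' (fun i => i - 1) (fun j => j + 1) <;>
          simp (config := {contextual := true}) [Finset.mem_Icc] <;> omega
    _ ≤ ((B:ℝ)-1) * x * (1/(1-r)) := by
        apply mul_le_mul_of_nonneg_left _ (by nlinarith)
        rw [le_div_iff₀ h1r]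
        have hg := geom_sum_mul r n
        have : (∑ j ∈ Finset.range n, r^j) * (1-r) = 1 - r^n := by linarith [hg]
        rw [this]
        nlinarith [pow_nonneg hr0 n]
    _ = ((B:ℝ)-1) * x / (1-r) := by ring
end
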